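/- For real numbers a ≥ b > 0, the integral over t ∈ [0,1] of log(a + b·cos(2πt)) dt equals log((a + sqrt(a² − b²))/2). -/

import Mathlib

open Real

open MeasureTheory Set Filter intervalIntegral Topology in

private lemma logabs_circle_avg {r : ℝ} (hr : |r| < 1) :
    ∫ θ in (0:ℝ)..(2*π), Real.log (‖(1 + r * Complex.exp (θ * Complex.I))‖) = 0 := by
  set f : ℂ → ℂ := fun z => Complex.log (1 + (r : ℂ) * z) with hf
  have hre : ∀ z : ℂ, ‖z‖ ≤ 1 → 0 < (1 + (r : ℂ) * z).re := by
    intro z hz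
    have h1 : |r * z.re| ≤ |r| * 1 := by
      rw [abs_mul]
      exact mul_le_mul_of_nonneg_left ((Complex.abs_re_le_norm z).trans hz) (abs_nonneg r)
    have : (1 + (r : ℂ) * z).re = 1 + r * z.re := by simp [Complex.add_re, Complex.mul_re]
    rw [this]
    nlinarith [neg_abs_le (r * z.re)]
  have hdiff : ∀ z : ℂ, ‖z‖ ≤ 1 → DifferentiableAt ℂ f z := by
    intro z hz
    have h1 : (1 + (r : ℂ) * z) ∈ Complex.slitPlane := Or.inl (hre z hz)
    exact (Complex.differentiableAt_log h1).comp z (f := fun z : ℂ => 1 + (r : ℂ) * z) (by fun_prop)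
  have hd : DifferentiableOn ℂ f (Metric.closedBall 0 1) := fun z hz =>
    (hdiff z (by simpa using Metric.mem_closedBall.mp hz)).differentiableWithinAt
  have hcauchy := hd.circleIntegral_sub_inv_smul (Metric.mem_ball_self one_pos)
  have hf0 : f 0 = 0 := by simp [hf]
  rw [hf0, smul_zero] at hcauchy
  -- unfold the circle integral
  have hkey : ∫ θ in (0:ℝ)..(2*π), Complex.I * f (Complex.exp (θ * Complex.I)) = 0 := by
    have h1 : ∀ θ : ℝ, deriv (circleMap 0 1) θ • ((circleMap 0 1 θ - 0)⁻¹ • f (circleMap 0 1 θ))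
        = Complex.I * f (Complex.exp (θ * Complex.I)) := by
      intro θ
      have hz : circleMap 0 1 θ = Complex.exp (θ * Complex.I) := by simp [circleMap]
      have hzne : circleMap 0 1 θ ≠ 0 := circleMap_ne_center one_ne_zero
      rw [deriv_circleMap, smul_eq_mul, smul_eq_mul, sub_zero]
      rw [show circleMap 0 1 θ * Complex.I * ((circleMap 0 1 θ)⁻¹ * f (circleMap 0 1 θ))
          = (circleMap 0 1 θ * (circleMap 0 1 θ)⁻¹) * (Complex.I * f (circleMap 0 1 θ)) by ring]
      rw [mul_inv_cancel₀ hzne, one_mul, hz]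
    have := hcauchy
    unfold circleIntegral at this
    simp_rw [h1] at this
    exact this
  rw [intervalIntegral.integral_const_mul] at hkey
  have hIne : (Complex.I : ℂ) ≠ 0 := Complex.I_ne_zero
  have hint0 : ∫ θ in (0:ℝ)..(2*π), f (Complex.exp (θ * Complex.I)) = 0 := by
    rcases mul_eq_zero.mp hkey with h | h
    · exact absurd h hIne
    · exact h
  -- take real parts
  have hcont : Continuous fun θ : ℝ => f (Complex.exp (θ * Complex.I)) := by
    rw [continuous_iff_continuousAt]
    intro θ
    have habs : ‖Complex.exp ((θ:ℂ) * Complex.I)‖ ≤ 1 := by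
      rw [Complex.norm_exp]; simp
    exact ((hdiff _ habs).continuousAt).comp (x := θ)
      (f := fun θ : ℝ => Complex.exp ((θ:ℂ) * Complex.I)) (by fun_prop)
  have hii : IntervalIntegrable (fun θ : ℝ => f (Complex.exp (θ * Complex.I)))
      volume 0 (2*π) := hcont.intervalIntegrable _ _
  have := Complex.reCLM.intervalIntegral_comp_comm hii
  rw [hint0] at this
  simp only [Complex.reCLM_apply, Complex.zero_re] at this
  rw [← this]
  congr 1
  ext θ
  rw [hf]
  exact (Complex.log_re _).symm

open MeasureTheory Set Filter intervalIntegral Topology in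
lemma key_lt (a b : ℝ) (hb : 0 < b) (hab : b < a) :
    ∫ t in (0:ℝ)..1, Real.log (a + b * Real.cos (2 * π * t)) =
      Real.log ((a + Real.sqrt (a ^ 2 - b ^ 2)) / 2) := by
  set s := Real.sqrt (a ^ 2 - b ^ 2) with hs
  have ha : 0 < a := hb.trans hab
  have hs2 : s ^ 2 = a ^ 2 - b ^ 2 := Real.sq_sqrt (by nlinarith)
  have hs0 : 0 < s := Real.sqrt_pos.mpr (by nlinarith)
  set r := b / (a + s) with hr
  have hasp : 0 < a + s := by linarith
  have hr0 : 0 < r := div_pos hb hasp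
  have hr1 : r < 1 := (div_lt_one hasp).mpr (by linarith)
  have hrabs : |r| < 1 := by rw [abs_of_pos hr0]; exact hr1
  -- pointwise identity
  have hpt : ∀ θ : ℝ, Real.log (a + b * Real.cos θ) =
      Real.log ((a + s) / 2) + 2 * Real.log (‖(1 + r * Complex.exp (θ * Complex.I))‖) := by
    intro θ
    have habs2 : (‖(1 + r * Complex.exp (θ * Complex.I))‖) ^ 2
        = 1 + 2 * r * Real.cos θ + r ^ 2 := by
      rw [Complex.sq_norm, Complex.exp_mul_I, Complex.normSq_apply]
      simp only [Complex.add_re, Complex.add_im, Complex.one_re, Complex.one_im, Complex.mul_re,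
        Complex.mul_im, Complex.ofReal_re, Complex.ofReal_im, Complex.cos_ofReal_re,
        Complex.cos_ofReal_im, Complex.sin_ofReal_re, Complex.sin_ofReal_im, Complex.I_re,
        Complex.I_im]
      nlinarith [Real.sin_sq_add_cos_sq θ]
    have hid : a + b * Real.cos θ =
        ((a + s) / 2) * (‖(1 + r * Complex.exp (θ * Complex.I))‖) ^ 2 := by
      rw [habs2, hr]
      field_simp
      nlinarith [hs2]
    have hpos : 0 < a + b * Real.cos θ := by nlinarith [Real.neg_one_le_cos θ]
    have habspos : 0 < ‖(1 + r * Complex.exp (θ * Complex.I))‖ := by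
      by_contra h
      push_neg at h
      have : ‖(1 + r * Complex.exp (θ * Complex.I))‖ = 0 :=
        le_antisymm h (norm_nonneg _)
      rw [hid, this] at hpos; norm_num at hpos
    rw [hid, Real.log_mul (by positivity) (by positivity), Real.log_pow]
    push_cast
    ring
  -- continuity facts
  have hcont1 : Continuous fun θ : ℝ => Real.log (a + b * Real.cos θ) :=
    Continuous.log (by fun_prop) (fun θ => by nlinarith [Real.neg_one_le_cos θ])
  have habspos : ∀ θ : ℝ, 0 < ‖(1 + r * Complex.exp (θ * Complex.I))‖ := by
    intro θ
    have h1 : (1 + (r:ℂ) * Complex.exp (θ * Complex.I)).re = 1 + r * Real.cos θ := by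
      rw [Complex.exp_mul_I]
      simp [Complex.add_re, Complex.mul_re, Complex.cos_ofReal_re, Complex.sin_ofReal_im,
        Complex.ofReal_im]
    have h2 : |r * Real.cos θ| < 1 := by
      rw [abs_mul, abs_of_pos hr0]
      calc r * |Real.cos θ| ≤ r * 1 := by
            exact mul_le_mul_of_nonneg_left (Real.abs_cos_le_one θ) hr0.le
        _ < 1 := by linarith
    calc (0:ℝ) < 1 + r * Real.cos θ := by nlinarith [neg_abs_le (r * Real.cos θ)]
      _ = (1 + (r:ℂ) * Complex.exp (θ * Complex.I)).re := h1.symm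
      _ ≤ ‖(1 + (r:ℂ) * Complex.exp (θ * Complex.I))‖ := Complex.re_le_norm _
  have hcont2 : Continuous fun θ : ℝ =>
      Real.log (‖(1 + r * Complex.exp (θ * Complex.I))‖) :=
    Continuous.log (continuous_norm.comp (by fun_prop)) (fun θ => (habspos θ).ne')
  -- integral over θ from 0 to 2π
  have hθ : ∫ θ in (0:ℝ)..(2*π), Real.log (a + b * Real.cos θ)
      = 2 * π * Real.log ((a + s) / 2) := by
    have h1 : ∫ θ in (0:ℝ)..(2*π), (Real.log ((a + s) / 2)
        + 2 * Real.log (‖(1 + r * Complex.exp (θ * Complex.I))‖))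
        = 2 * π * Real.log ((a + s) / 2) := by
      rw [intervalIntegral.integral_add (intervalIntegrable_const)
        ((hcont2.const_mul 2).intervalIntegrable _ _),
        intervalIntegral.integral_const_mul, logabs_circle_avg hrabs]
      simp [mul_comm]
    rw [← h1]
    exact intervalIntegral.integral_congr (fun θ _ => hpt θ)
  -- substitute t = θ/(2π)
  have h2 : ∫ t in (0:ℝ)..1, Real.log (a + b * Real.cos (2 * π * t))
      = (2*π)⁻¹ • ∫ θ in (2*π*0 : ℝ)..(2*π*1), Real.log (a + b * Real.cos θ) :=
    intervalIntegral.integral_comp_mul_left (c := 2*π)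
      (f := fun θ => Real.log (a + b * Real.cos θ)) (by positivity)
  rw [h2]
  norm_num [hθ]
  field_simp

open MeasureTheory Set Filter intervalIntegral Topology in
lemma loglem : IntervalIntegrable Real.log volume 0 1 := by
  rw [intervalIntegrable_iff, uIoc_of_le zero_le_one]
  have hg : IntegrableOn (fun x : ℝ => 2 * x ^ (-(1/2) : ℝ)) (Ioc 0 1) volume := by
    have h := intervalIntegral.intervalIntegrable_rpow' (a := 0) (b := 1) (r := -(1/2))
      (by norm_num)
    rw [intervalIntegrable_iff, uIoc_of_le zero_le_one] at h
    exact h.const_mul 2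
  refine Integrable.mono' hg Real.measurable_log.aestronglyMeasurable ?_
  rw [ae_restrict_iff' measurableSet_Ioc]
  filter_upwards with x hx
  obtain ⟨hx0, hx1⟩ := hx
  have hlogle : Real.log x ≤ 0 := Real.log_nonpos hx0.le hx1
  rw [Real.norm_eq_abs, abs_of_nonpos hlogle]
  have h1 : Real.log (x ^ (-(1/2) : ℝ)) ≤ x ^ (-(1/2) : ℝ) - 1 :=
    Real.log_le_sub_one_of_pos (Real.rpow_pos_of_pos hx0 _)
  rw [Real.log_rpow hx0] at h1
  nlinarith [Real.rpow_pos_of_pos hx0 (-(1/2) : ℝ)]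

open MeasureTheory Set Filter intervalIntegral Topology in
lemma logshift : IntervalIntegrable (fun x : ℝ => Real.log (x - 1/2)) volume 0 1 := by
  have hsub : uIcc (0:ℝ) (1/2) ⊆ uIcc (0:ℝ) 1 := by
    rw [uIcc_of_le (by norm_num : (0:ℝ) ≤ 1/2), uIcc_of_le zero_le_one]
    exact Icc_subset_Icc le_rfl (by norm_num)
  have h1 : IntervalIntegrable Real.log volume 0 (1/2) := loglem.mono_set hsub
  have h2 : IntervalIntegrable (fun x : ℝ => Real.log (-x)) volume (-0) (-(1/2)) :=
    (IntervalIntegrable.iff_comp_neg).mp h1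
  have h2' : IntervalIntegrable Real.log volume (-(1/2)) 0 := by
    have : (fun x : ℝ => Real.log (-x)) = Real.log := funext Real.log_neg_eq_log
    rw [this, neg_zero] at h2
    exact h2.symm
  have h3 : IntervalIntegrable Real.log volume (-(1/2)) (1/2) := h2'.trans h1
  have h4 := h3.comp_sub_right (1/2)
  norm_num at h4
  exact h4

open MeasureTheory Set Filter intervalIntegral Topology in
theorem stmt_0 (a b : ℝ) (hab : a ≥ b) (hb : 0 < b) :
    ∫ t in (0:ℝ)..1, Real.log (a + b * Real.cos (2 * π * t)) =
      Real.log ((a + Real.sqrt (a ^ 2 - b ^ 2)) / 2) := by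
  rcases lt_or_eq_of_le (hab : b ≤ a) with h | h
  · exact key_lt a b hb h
  · subst h
    -- a = b case, via dominated convergence
    rw [show b ^ 2 - b ^ 2 = 0 by ring, Real.sqrt_zero, add_zero]
    set f : ℝ → ℝ := fun t => Real.log (b + b * Real.cos (2 * π * t)) with hfdef
    set F : ℕ → ℝ → ℝ :=
      fun n t => Real.log (b + 1/((n : ℝ)+1) + b * Real.cos (2 * π * t)) with hFdef
    set bound : ℝ → ℝ :=
      fun t => |Real.log (2*b+1)| + |Real.log (8*b)| + 2 * ‖Real.log (t - 1/2)‖ with hbdef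
    have hae : ∀ᵐ x : ℝ ∂volume, x ≠ (1/2 : ℝ) := by
      rw [ae_iff]
      have : {x : ℝ | ¬x ≠ 1/2} = {(1/2 : ℝ)} := by ext y; simp
      rw [this]
      exact measure_singleton _
    -- key lower bound
    have hkey : ∀ x : ℝ, x ∈ Set.uIoc (0:ℝ) 1 → 8*b*(x - 1/2)^2 ≤ b + b * Real.cos (2*π*x) := by
      intro x hx
      rw [uIoc_of_le zero_le_one] at hx
      obtain ⟨hx0, hx1⟩ := hx
      have h1 : b + b * Real.cos (2*π*x) = 2 * b * Real.cos (π*x)^2 := by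
        have := Real.cos_sq (π*x)
        rw [show 2*(π*x) = 2*π*x by ring] at this
        nlinarith [this]
      have habs : |x - 1/2| ≤ 1/2 := by rw [abs_le]; constructor <;> linarith
      have hy0 : (0:ℝ) ≤ π * |x - 1/2| := by positivity
      have hy1 : π * |x - 1/2| ≤ π / 2 := by nlinarith [Real.pi_pos]
      have hsin := Real.mul_le_sin hy0 hy1
      have hsin' : 2 * |x - 1/2| ≤ Real.sin (π * |x - 1/2|) := by
        have hpi := Real.pi_pos
        calc 2 * |x - 1/2| = 2/π * (π * |x - 1/2|) := by
              field_simp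
          _ ≤ _ := hsin
      have hsq : Real.sin (π * |x - 1/2|) ^ 2 = Real.cos (π*x) ^ 2 := by
        have h2 : Real.sin (π * (x - 1/2)) = -Real.cos (π * x) := by
          rw [show π * (x - 1/2) = π * x - π/2 by ring]
          exact Real.sin_sub_pi_div_two (π * x)
        rcases abs_cases (x - 1/2) with ⟨he, _⟩ | ⟨he, _⟩
        · rw [he, h2]; ring
        · rw [he, show π * -(x - 1/2) = -(π * (x - 1/2)) by ring, Real.sin_neg, h2]; ring
      have h4 : (2 * |x - 1/2|)^2 ≤ Real.sin (π * |x - 1/2|) ^ 2 :=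
        pow_le_pow_left₀ (by positivity) hsin' 2
      rw [hsq] at h4
      have h5 : (2 * |x - 1/2|)^2 = 4 * (x - 1/2)^2 := by
        rw [mul_pow, sq_abs]; ring
      nlinarith [h4, h5]
    have hF_meas : ∀ᶠ n in atTop, AEStronglyMeasurable (F n) (volume.restrict (Set.uIoc (0:ℝ) 1)) := by
      filter_upwards with n
      have hc : Continuous (F n) := by
        apply Continuous.log (by fun_prop)
        intro t
        have hn : (0:ℝ) < 1/((n:ℝ)+1) := by positivity
        nlinarith [Real.neg_one_le_cos (2*π*t)]
      exact hc.aestronglyMeasurable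
    have h_bound : ∀ᶠ n in atTop, ∀ᵐ x ∂volume, x ∈ Set.uIoc (0:ℝ) 1 → ‖F n x‖ ≤ bound x := by
      filter_upwards with n
      filter_upwards [hae] with x hxne hx
      have hlow := hkey x hx
      have hne : (x - 1/2) ≠ 0 := sub_ne_zero.mpr hxne
      have hpos8 : 0 < 8*b*(x - 1/2)^2 := by positivity
      have hn0 : (0:ℝ) < 1/((n:ℝ)+1) := by positivity
      have hn1 : 1/((n:ℝ)+1) ≤ 1 := by
        rw [div_le_one (by positivity)]; simp
      have hargpos : 0 < b + 1/((n:ℝ)+1) + b * Real.cos (2*π*x) := by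
        nlinarith
      have hupper : F n x ≤ |Real.log (2*b+1)| := by
        calc F n x ≤ Real.log (2*b+1) := by
              apply Real.log_le_log hargpos
              nlinarith [Real.cos_le_one (2*π*x)]
          _ ≤ |Real.log (2*b+1)| := le_abs_self _
      have hlower : -(|Real.log (8*b)| + 2 * ‖Real.log (x - 1/2)‖) ≤ F n x := by
        have l1 : Real.log (8*b*(x - 1/2)^2) ≤ F n x := by
          apply Real.log_le_log hpos8
          nlinarith
        have l2 : Real.log (8*b*(x - 1/2)^2) =
            Real.log (8*b) + 2 * Real.log (x - 1/2) := by
          rw [Real.log_mul (by positivity) (pow_ne_zero 2 hne), Real.log_pow]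
          push_cast; ring
        rw [l2] at l1
        have l3 : -|Real.log (8*b)| ≤ Real.log (8*b) := neg_abs_le _
        have l4 : -‖Real.log (x - 1/2)‖ ≤ Real.log (x - 1/2) := by
          rw [Real.norm_eq_abs]; exact neg_abs_le _
        nlinarith
      rw [Real.norm_eq_abs, abs_le, hbdef]
      constructor
      · simp only []
        nlinarith [abs_nonneg (Real.log (2*b+1))]
      · simp only []
        nlinarith [abs_nonneg (Real.log (8*b)), norm_nonneg (Real.log (x - 1/2))]
    have bound_int : IntervalIntegrable bound volume 0 1 := by
      apply IntervalIntegrable.add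
      exact _root_.intervalIntegrable_const
      exact (logshift.norm).const_mul 2
    have h_lim : ∀ᵐ x ∂volume, x ∈ Set.uIoc (0:ℝ) 1 →
        Tendsto (fun n => F n x) atTop (𝓝 (f x)) := by
      filter_upwards [hae] with x hxne hx
      have hlow := hkey x hx
      have hne : (x - 1/2) ≠ 0 := sub_ne_zero.mpr hxne
      have hsqpos : 0 < (x - 1/2)^2 := by
        rcases hne.lt_or_gt with h | h <;> nlinarith
      have hpos : 0 < b + b * Real.cos (2*π*x) := by nlinarith
      have harg : Tendsto (fun n : ℕ => b + 1/((n:ℝ)+1) + b * Real.cos (2*π*x)) atTop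
          (𝓝 (b + b * Real.cos (2*π*x))) := by
        have := (tendsto_const_nhds (x := b) (f := atTop (α := ℕ))).add
          tendsto_one_div_add_atTop_nhds_zero_nat
        have h2 := this.add (tendsto_const_nhds (x := b * Real.cos (2*π*x)))
        simpa using h2
      exact ((Real.continuousAt_log hpos.ne').tendsto.comp harg :)
    have hDCT := intervalIntegral.tendsto_integral_filter_of_dominated_convergence
      (μ := volume) (a := 0) (b := 1) (F := F) (f := f) bound hF_meas h_bound bound_int h_lim
    -- each integral has closed form
    have heq : ∀ n : ℕ, ∫ t in (0:ℝ)..1, F n t =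
        Real.log ((b + 1/((n:ℝ)+1) +
          Real.sqrt ((b + 1/((n:ℝ)+1))^2 - b^2))/2) := by
      intro n
      exact key_lt (b + 1/((n:ℝ)+1)) b hb (lt_add_of_pos_right b (by positivity))
    have hrhs : Tendsto (fun n : ℕ => Real.log ((b + 1/((n:ℝ)+1) +
        Real.sqrt ((b + 1/((n:ℝ)+1))^2 - b^2))/2)) atTop (𝓝 (Real.log (b/2))) := by
      have ha : Tendsto (fun n : ℕ => b + 1/((n:ℝ)+1)) atTop (𝓝 b) := by
        simpa using (tendsto_const_nhds (x := b) (f := atTop (α := ℕ))).add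
          tendsto_one_div_add_atTop_nhds_zero_nat
      have hsq : Tendsto (fun n : ℕ => (b + 1/((n:ℝ)+1))^2 - b^2) atTop (𝓝 0) := by
        have := (ha.pow 2).sub (tendsto_const_nhds (x := b^2) (f := atTop (α := ℕ)))
        simpa using this
      have hsqrt : Tendsto (fun n : ℕ => Real.sqrt ((b + 1/((n:ℝ)+1))^2 - b^2)) atTop (𝓝 0) := by
        have := (Real.continuous_sqrt.tendsto 0).comp hsq
        simpa [Function.comp_def] using this
      have hin : Tendsto (fun n : ℕ => (b + 1/((n:ℝ)+1) +
          Real.sqrt ((b + 1/((n:ℝ)+1))^2 - b^2))/2) atTop (𝓝 (b/2)) := by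
        have := (ha.add hsqrt).div_const 2
        simpa using this
      exact ((Real.continuousAt_log (ne_of_gt (by positivity : (0:ℝ) < b/2))).tendsto.comp hin :)
    have hDCT' : Tendsto (fun n : ℕ => Real.log ((b + 1/((n:ℝ)+1) +
        Real.sqrt ((b + 1/((n:ℝ)+1))^2 - b^2))/2)) atTop (𝓝 (∫ t in (0:ℝ)..1, f t)) := by
      have hfe : (fun n : ℕ => ∫ t in (0:ℝ)..1, F n t) = fun n : ℕ => Real.log ((b + 1/((n:ℝ)+1) +
          Real.sqrt ((b + 1/((n:ℝ)+1))^2 - b^2))/2) := funext heq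
      rwa [hfe] at hDCT
    exact tendsto_nhds_unique hDCT' hrhs
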